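/- Let X₁, ..., X_n be i.i.d. copies of a nonnegative random variable X with finite mean μ > 0, and let Ĝ = [binom(n,2)^{-1} ∑_{1≤i<j≤n} |X_i - X_j|]/(2 X̄) on the event ∑ X_k > 0 (and Ĝ = 0 otherwise), where X̄ = n^{-1}∑X_k. Then E[Ĝ] = (n/2) ∫₀^∞ E[|X₁ - X₂| exp(-z(X₁+X₂))] L(z)^{n-2} dz, where L(z) = E[exp(-zX)] is the Laplace transform of X, assuming the relevant integrals exist. -/

import Mathlib

open MeasureTheory Set ProbabilityTheory
open scoped ENNReal

/-- The (upward-adjusted) Gini coefficient estimator from a sample `X 0, ..., X (n-1)`. -/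
noncomputable def giniEstimator {Ω : Type*} (n : ℕ) (X : Fin n → Ω → ℝ) (ω : Ω) : ℝ :=
  if 0 < ∑ k, X k ω then
    ((n.choose 2 : ℝ)⁻¹ * ∑ i, ∑ j, if i < j then |X i ω - X j ω| else 0)
      / (2 * ((∑ k, X k ω) / n))
  else 0

lemma gini_count (n : ℕ) :
    (∑ i : Fin n, ∑ j : Fin n, if i < j then 1 else 0) = n.choose 2 := by
  have h1 : ∀ i : Fin n, (∑ j : Fin n, if i < j then 1 else 0) = n - 1 - (i : ℕ) := by
    intro i
    rw [Finset.sum_boole]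
    norm_cast
    have : Finset.univ.filter (fun j => i < j) = Finset.Ioi i := by
      ext j; simp [Finset.mem_Ioi]
    rw [this, Fin.card_Ioi]
  simp_rw [h1]
  rw [Fin.sum_univ_eq_sum_range (fun m => n - 1 - m) n]
  have h2 := Finset.sum_range_reflect (fun m => m) n
  have h3 : ∀ m ∈ Finset.range n, n - 1 - m = (fun m => m) (n - 1 - m) := fun _ _ => rfl
  rw [Finset.sum_congr rfl h3, h2, Finset.sum_range_id, Nat.choose_two_right]

lemma gini_exp_lint {s : ℝ} (hs : 0 < s) :
    ∫⁻ z in Ioi (0:ℝ), ENNReal.ofReal (Real.exp (-z * s)) = ENNReal.ofReal s⁻¹ := by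
  have heq : ∀ z : ℝ, Real.exp (-z * s) = Real.exp (-s * z) := by
    intro z; ring_nf
  simp_rw [heq]
  rw [← ofReal_integral_eq_lintegral_ofReal (exp_neg_integrableOn_Ioi 0 hs)
    (Filter.Eventually.of_forall fun z => (Real.exp_pos _).le)]
  congr 1
  have h := integral_comp_mul_left_Ioi (fun x => Real.exp (-x)) 0 hs
  simp only [mul_zero, smul_eq_mul, neg_zero, integral_exp_neg_Ioi, Real.exp_zero, mul_one,
    neg_mul] at h ⊢
  exact h

set_option maxHeartbeats 2000000 in
theorem expectation_gini_estimator
    {Ω : Type*} [MeasurableSpace Ω] (P : Measure Ω) [IsProbabilityMeasure P]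
    (n : ℕ) (hn : 2 ≤ n)
    (X₀ : Ω → ℝ) (hX₀ : Measurable X₀) (hpos : ∀ ω, 0 ≤ X₀ ω)
    (hint : Integrable X₀ P) (hμpos : 0 < ∫ ω, X₀ ω ∂P)
    (X : Fin n → Ω → ℝ) (hX : ∀ i, Measurable (X i))
    (hid : ∀ i, IdentDistrib (X i) X₀ P P)
    (hindep : iIndepFun X P)
    (hGint : Integrable (giniEstimator n X) P)
    (hzint : IntegrableOn
      (fun z => (∫ ω, |X ⟨0, by omega⟩ ω - X ⟨1, by omega⟩ ω|
            * Real.exp (-z * (X ⟨0, by omega⟩ ω + X ⟨1, by omega⟩ ω)) ∂P)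
          * (∫ ω, Real.exp (-z * X₀ ω) ∂P) ^ (n - 2)) (Ioi 0)) :
    ∫ ω, giniEstimator n X ω ∂P
      = (n / 2) * ∫ z in Ioi (0:ℝ),
          (∫ ω, |X ⟨0, by omega⟩ ω - X ⟨1, by omega⟩ ω|
              * Real.exp (-z * (X ⟨0, by omega⟩ ω + X ⟨1, by omega⟩ ω)) ∂P)
            * (∫ ω, Real.exp (-z * X₀ ω) ∂P) ^ (n - 2) := by
  classical
  have h0n : 0 < n := by omega
  set i0 : Fin n := ⟨0, by omega⟩ with hi0
  set i1 : Fin n := ⟨1, by omega⟩ with hi1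
  have hne : i0 ≠ i1 := by simp [hi0, hi1, Fin.ext_iff]
  have hCpos : 0 < n.choose 2 := Nat.choose_pos hn
  set S : Ω → ℝ := fun ω => ∑ k, X k ω with hSdef
  have hS : Measurable S := Finset.measurable_sum _ (fun i _ => hX i)
  -- per-pair functions
  set f : Fin n → Fin n → Ω → ℝ :=
    fun i j ω => if 0 < S ω then |X i ω - X j ω| / S ω else 0 with hfdef
  have hfmeas : ∀ i j, Measurable (f i j) := fun i j =>
    Measurable.ite (measurableSet_lt measurable_const hS)
      (((hX i).sub (hX j)).abs.div hS) measurable_const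
  have hfnn : ∀ i j ω, 0 ≤ f i j ω := by
    intro i j ω
    simp only [hfdef]
    split
    · exact div_nonneg (abs_nonneg _) (by linarith)
    · exact le_refl 0
  -- a.e. nonnegativity of all coordinates
  have hae : ∀ᵐ ω ∂P, ∀ k, 0 ≤ X k ω := by
    rw [ae_all_iff]
    intro k
    rw [ae_iff]
    have h1 : {a | ¬ 0 ≤ X k a} = X k ⁻¹' (Iio 0) := by ext a; simp [not_le]
    rw [h1, ← Measure.map_apply (hX k) measurableSet_Iio, (hid k).map_eq,
      Measure.map_apply hX₀ measurableSet_Iio]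
    have h2 : X₀ ⁻¹' (Iio 0) = ∅ := by
      ext a
      simp only [mem_preimage, mem_Iio, mem_empty_iff_false, iff_false]
      exact not_lt.mpr (hpos a)
    simp [h2]
  -- integrability of the X i
  have hXint : ∀ i, Integrable (X i) P := fun i => (hid i).integrable_iff.mpr hint
  -- transfer lemma for lintegrals of functions of a single coordinate
  have htrans : ∀ (a : Fin n) (φ : ℝ → ℝ≥0∞), Measurable φ →
      ∫⁻ ω, φ (X a ω) ∂P = ∫⁻ ω, φ (X₀ ω) ∂P := by
    intro a φ hφ
    rw [← lintegral_map hφ (hX a), (hid a).map_eq, lintegral_map hφ hX₀]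
  -- the main ENNReal-valued objects
  set Am : ℝ → ℝ≥0∞ := fun z =>
    ∫⁻ ω, ENNReal.ofReal (|X i0 ω - X i1 ω| * Real.exp (-z * (X i0 ω + X i1 ω))) ∂P with hAm
  set Lm : ℝ → ℝ≥0∞ := fun z => ∫⁻ ω, ENNReal.ofReal (Real.exp (-z * X₀ ω)) ∂P with hLm
  -- real rewrite of the estimator
  have hG : ∀ ω, giniEstimator n X ω
      = ((n : ℝ) / (2 * n.choose 2)) * ∑ i, ∑ j, if i < j then f i j ω else 0 := by
    intro ω
    by_cases h : 0 < S ω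
    · have hSne : S ω ≠ 0 := ne_of_gt h
      have hsum : (∑ i, ∑ j, if i < j then f i j ω else 0)
          = (∑ i, ∑ j, if i < j then |X i ω - X j ω| else 0) / S ω := by
        rw [Finset.sum_div]
        refine Finset.sum_congr rfl fun i _ => ?_
        rw [Finset.sum_div]
        refine Finset.sum_congr rfl fun j _ => ?_
        by_cases hij : i < j
        · simp only [if_pos hij, hfdef, if_pos h]
        · simp [hij]
      rw [hsum]
      simp only [giniEstimator]
      rw [if_pos (show 0 < ∑ k, X k ω from h)]
      have hn' : (n:ℝ) ≠ 0 := Nat.cast_ne_zero.mpr (by omega)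
      have hC' : (n.choose 2 : ℝ) ≠ 0 := Nat.cast_ne_zero.mpr (by omega)
      have hS' : (∑ k, X k ω) ≠ 0 := hSne
      field_simp
      ring
    · simp only [giniEstimator]
      rw [if_neg (show ¬ 0 < ∑ k, X k ω from h)]
      have : ∀ i j : Fin n, f i j ω = 0 := by
        intro i j; simp only [hfdef]; rw [if_neg h]
      simp [this]
  -- exchangeability
  have hexch : ∀ i j : Fin n, i < j →
      ∫⁻ ω, ENNReal.ofReal (f i j ω) ∂P = ∫⁻ ω, ENNReal.ofReal (f i0 i1 ω) ∂P := by
    intro i j hij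
    set μ0 : Measure ℝ := P.map X₀ with hμ0
    haveI : IsProbabilityMeasure μ0 := Measure.isProbabilityMeasure_map hX₀.aemeasurable
    set π : Measure (Fin n → ℝ) := Measure.pi (fun _ => μ0) with hπ
    set Y : Ω → (Fin n → ℝ) := fun ω k => X k ω with hY
    have hYmeas : Measurable Y := measurable_pi_lambda _ hX
    have hmap : P.map Y = π := by
      refine (Measure.pi_eq fun s hs => ?_).symm
      rw [Measure.map_apply hYmeas (MeasurableSet.univ_pi hs)]
      have hpre : Y ⁻¹' (univ.pi s) = ⋂ k ∈ (Finset.univ : Finset (Fin n)), X k ⁻¹' s k := by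
        ext ω; simp [hY, Set.mem_pi]
      rw [hpre, hindep.measure_inter_preimage_eq_mul Finset.univ (fun k _ => hs k)]
      refine Finset.prod_congr rfl fun k _ => ?_
      rw [hμ0, ← (hid k).map_eq, Measure.map_apply (hX k) (hs k)]
    set g : Fin n → Fin n → (Fin n → ℝ) → ℝ≥0∞ := fun a b x =>
      ENNReal.ofReal (if 0 < ∑ k, x k then |x a - x b| / ∑ k, x k else 0) with hg
    have hsm : Measurable fun x : Fin n → ℝ => ∑ k, x k :=
      Finset.measurable_sum _ fun k _ => measurable_pi_apply k
    have hgmeas : ∀ a b, Measurable (g a b) := by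
      intro a b
      apply Measurable.ennreal_ofReal
      exact Measurable.ite (measurableSet_lt measurable_const hsm)
        (((measurable_pi_apply a).sub (measurable_pi_apply b)).abs.div hsm) measurable_const
    have htransY : ∀ a b : Fin n,
        ∫⁻ ω, ENNReal.ofReal (f a b ω) ∂P = ∫⁻ x, g a b x ∂π := by
      intro a b
      rw [← hmap, lintegral_map (hgmeas a b) hYmeas]
    rw [htransY i j, htransY i0 i1]
    have hijne : i ≠ j := ne_of_lt hij
    set τ : Equiv.Perm (Fin n) := Equiv.swap i0 i with hτ
    set σ : Equiv.Perm (Fin n) := (Equiv.swap i1 (τ j)).trans τ with hσ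
    have hσ0 : σ i0 = i := by
      have h1 : i0 ≠ τ j := by
        intro hcon
        have h2 : τ i0 = τ (τ j) := by rw [← hcon]
        rw [Equiv.swap_apply_left, Equiv.swap_apply_self] at h2
        exact hijne h2
      simp only [hσ, Equiv.trans_apply]
      rw [Equiv.swap_apply_of_ne_of_ne hne h1, hτ, Equiv.swap_apply_left]
    have hσ1 : σ i1 = j := by
      simp only [hσ, Equiv.trans_apply]
      rw [Equiv.swap_apply_left, hτ, Equiv.swap_apply_self]
    have hmp : MeasurePreserving
        (MeasurableEquiv.piCongrLeft (fun _ : Fin n => ℝ) σ.symm) π π :=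
      measurePreserving_piCongrLeft (fun _ => μ0) σ.symm
    have hTval : ∀ (x : Fin n → ℝ) (b : Fin n),
        (MeasurableEquiv.piCongrLeft (fun _ : Fin n => ℝ) σ.symm) x b = x (σ b) := by
      intro x b
      have h := Equiv.piCongrLeft_apply_apply (fun _ : Fin n => ℝ) σ.symm x (σ b)
      simp only [Equiv.symm_apply_apply] at h
      simpa [MeasurableEquiv.coe_piCongrLeft] using h
    rw [← hmp.lintegral_comp (hgmeas i0 i1)]
    refine lintegral_congr fun x => ?_
    have hsumT : (∑ k, (MeasurableEquiv.piCongrLeft (fun _ : Fin n => ℝ) σ.symm) x k)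
        = ∑ k, x k := by
      rw [Finset.sum_congr rfl fun k _ => hTval x k]
      exact Equiv.sum_comp σ x
    simp only [hg]
    rw [hsumT, hTval x i0, hTval x i1, hσ0, hσ1]
  -- independence factorization
  have hfact : ∀ z : ℝ,
      ∫⁻ ω, ENNReal.ofReal (|X i0 ω - X i1 ω| * Real.exp (-z * S ω)) ∂P
        = Am z * (Lm z) ^ (n - 2) := by
    intro z
    have hphi : Measurable fun t : ℝ => ENNReal.ofReal (Real.exp (-z * t)) :=
      (Real.measurable_exp.comp (measurable_id.const_mul (-z))).ennreal_ofReal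
    have hsum : ∀ s : Finset (Fin n),
        ∫⁻ ω, ENNReal.ofReal (Real.exp (-z * ∑ k ∈ s, X k ω)) ∂P = (Lm z) ^ s.card := by
      intro s
      induction s using Finset.induction_on with
      | empty => simp
      | @insert a s ha ih =>
        have hXs : Measurable fun ω => ∑ k ∈ s, X k ω :=
          Finset.measurable_sum _ fun i _ => hX i
        have hIndep : IndepFun (X a) (fun ω => ∑ k ∈ s, X k ω) P := by
          have h := hindep.indepFun_finsetSum_of_notMem hX ha
          have h2 : (∑ j ∈ s, X j) = fun ω => ∑ k ∈ s, X k ω := by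
            ext ω; simp [Finset.sum_apply]
          rw [h2] at h
          exact h.symm
        have hI2 : IndepFun ((fun t : ℝ => ENNReal.ofReal (Real.exp (-z * t))) ∘ (X a))
            ((fun t : ℝ => ENNReal.ofReal (Real.exp (-z * t))) ∘ (fun ω => ∑ k ∈ s, X k ω)) P :=
          hIndep.comp hphi hphi
        calc ∫⁻ ω, ENNReal.ofReal (Real.exp (-z * ∑ k ∈ insert a s, X k ω)) ∂P
            = ∫⁻ ω, ENNReal.ofReal (Real.exp (-z * X a ω))
                * ENNReal.ofReal (Real.exp (-z * ∑ k ∈ s, X k ω)) ∂P := by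
              congr 1; ext ω
              rw [Finset.sum_insert ha,
                show -z * (X a ω + ∑ k ∈ s, X k ω)
                  = -z * X a ω + -z * ∑ k ∈ s, X k ω by ring,
                Real.exp_add, ENNReal.ofReal_mul (Real.exp_nonneg _)]
          _ = (∫⁻ ω, ENNReal.ofReal (Real.exp (-z * X a ω)) ∂P)
                * ∫⁻ ω, ENNReal.ofReal (Real.exp (-z * ∑ k ∈ s, X k ω)) ∂P :=
              lintegral_mul_eq_lintegral_mul_lintegral_of_indepFun''
                ((hphi.comp (hX a)).aemeasurable) ((hphi.comp hXs).aemeasurable) hI2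
          _ = Lm z * (Lm z) ^ s.card := by
              rw [htrans a _ hphi, ih]
          _ = (Lm z) ^ (insert a s).card := by
              rw [Finset.card_insert_of_notMem ha, pow_succ]; ring
    set Tc : Finset (Fin n) := Finset.univ \ {i0, i1} with hTc
    have hTcard : Tc.card = n - 2 := by
      rw [hTc, Finset.card_sdiff_of_subset (Finset.subset_univ _), Finset.card_univ, Fintype.card_fin,
        Finset.card_pair hne]
    have hsplit : ∀ ω, S ω = (X i0 ω + X i1 ω) + ∑ k ∈ Tc, X k ω := by
      intro ω
      have h := Finset.sum_sdiff (f := fun k => X k ω)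
        (Finset.subset_univ ({i0, i1} : Finset (Fin n)))
      rw [Finset.sum_pair hne] at h
      simp only [hSdef, hTc]
      linarith [h]
    have hDisj : Disjoint ({i0, i1} : Finset (Fin n)) Tc := Finset.disjoint_sdiff
    have hIF := hindep.indepFun_finset {i0, i1} Tc hDisj hX
    set a0 : ({i0, i1} : Finset (Fin n)) := ⟨i0, by simp⟩ with ha0
    set a1 : ({i0, i1} : Finset (Fin n)) := ⟨i1, by simp⟩ with ha1
    set φ₁ : (({i0, i1} : Finset (Fin n)) → ℝ) → ℝ≥0∞ := fun v =>
      ENNReal.ofReal (|v a0 - v a1| * Real.exp (-z * (v a0 + v a1))) with hphi1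
    set φ₂ : (↥Tc → ℝ) → ℝ≥0∞ := fun w =>
      ENNReal.ofReal (Real.exp (-z * ∑ k, w k)) with hphi2
    have hφ₁ : Measurable φ₁ := by
      apply Measurable.ennreal_ofReal
      exact (((measurable_pi_apply a0).sub (measurable_pi_apply a1)).abs).mul
        (Real.measurable_exp.comp
          (Measurable.const_mul (f := fun x : (({i0, i1} : Finset (Fin n)) → ℝ) => x a0 + x a1) ((measurable_pi_apply a0).add (measurable_pi_apply a1)) (-z)))
    have hφ₂ : Measurable φ₂ := by
      apply Measurable.ennreal_ofReal
      exact Real.measurable_exp.comp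
        ((Finset.measurable_sum _ fun k _ => measurable_pi_apply k).const_mul (-z))
    have hI3 : IndepFun (φ₁ ∘ (fun ω (k : ({i0, i1} : Finset (Fin n))) => X k ω))
        (φ₂ ∘ (fun ω (k : ↥Tc) => X k ω)) P := hIF.comp hφ₁ hφ₂
    calc ∫⁻ ω, ENNReal.ofReal (|X i0 ω - X i1 ω| * Real.exp (-z * S ω)) ∂P
        = ∫⁻ ω, (φ₁ ∘ (fun ω (k : ({i0, i1} : Finset (Fin n))) => X k ω)) ω
            * (φ₂ ∘ (fun ω (k : ↥Tc) => X k ω)) ω ∂P := by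
          congr 1; ext ω
          simp only [Function.comp_apply, hphi1, hphi2, ha0, ha1]
          rw [Finset.sum_coe_sort Tc (fun k => X k ω), hsplit ω,
            show -z * ((X i0 ω + X i1 ω) + ∑ k ∈ Tc, X k ω)
              = -z * (X i0 ω + X i1 ω) + -z * ∑ k ∈ Tc, X k ω by ring,
            Real.exp_add, ← mul_assoc,
            ENNReal.ofReal_mul (mul_nonneg (abs_nonneg _) (Real.exp_nonneg _))]
      _ = (∫⁻ ω, (φ₁ ∘ (fun ω (k : ({i0, i1} : Finset (Fin n))) => X k ω)) ω ∂P)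
            * ∫⁻ ω, (φ₂ ∘ (fun ω (k : ↥Tc) => X k ω)) ω ∂P :=
          lintegral_mul_eq_lintegral_mul_lintegral_of_indepFun''
            ((hφ₁.comp (measurable_pi_lambda _ fun k => hX k)).aemeasurable)
            ((hφ₂.comp (measurable_pi_lambda _ fun k => hX k)).aemeasurable) hI3
      _ = Am z * (Lm z) ^ (n - 2) := by
          have h2 : (∫⁻ ω, (φ₂ ∘ (fun ω (k : ↥Tc) => X k ω)) ω ∂P)
              = (Lm z) ^ (n - 2) := by
            rw [show (∫⁻ ω, (φ₂ ∘ (fun ω (k : ↥Tc) => X k ω)) ω ∂P)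
                = ∫⁻ ω, ENNReal.ofReal (Real.exp (-z * ∑ k ∈ Tc, X k ω)) ∂P by
                congr 1; ext ω
                simp only [Function.comp_apply, hphi2]
                rw [Finset.sum_coe_sort Tc (fun k => X k ω)],
              hsum Tc, hTcard]
          have h1 : (∫⁻ ω, (φ₁ ∘ (fun ω (k : ({i0, i1} : Finset (Fin n))) => X k ω)) ω ∂P)
              = Am z := rfl
          rw [h1, h2]
  -- the inverse-sum trick + Tonelli
  have hf01 : ∫⁻ ω, ENNReal.ofReal (f i0 i1 ω) ∂P
      = ∫⁻ z in Ioi (0:ℝ), Am z * (Lm z) ^ (n - 2) := by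
    have hpt : ∀ᵐ ω ∂P, ENNReal.ofReal (f i0 i1 ω)
        = ∫⁻ z in Ioi (0:ℝ),
            ENNReal.ofReal (|X i0 ω - X i1 ω| * Real.exp (-z * S ω)) := by
      filter_upwards [hae] with ω hω
      by_cases h : 0 < S ω
      · have hmul : ∀ z : ℝ, ENNReal.ofReal (|X i0 ω - X i1 ω| * Real.exp (-z * S ω))
            = ENNReal.ofReal |X i0 ω - X i1 ω| * ENNReal.ofReal (Real.exp (-z * S ω)) :=
          fun z => ENNReal.ofReal_mul (abs_nonneg _)
        simp only [hmul]
        rw [lintegral_const_mul (μ := volume.restrict (Ioi 0))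
          (r := ENNReal.ofReal |X i0 ω - X i1 ω|)
          (f := fun z => ENNReal.ofReal (Real.exp (-z * S ω))) (by fun_prop),
          gini_exp_lint h, ← ENNReal.ofReal_mul (abs_nonneg _)]
        simp only [hfdef]
        rw [if_pos h, div_eq_mul_inv]
      · have hS0 : S ω = 0 := le_antisymm (not_lt.mp h) (Finset.sum_nonneg fun k _ => hω k)
        have hX0 : X i0 ω = 0 :=
          (Finset.sum_eq_zero_iff_of_nonneg (fun k _ => hω k)).mp hS0 i0 (Finset.mem_univ _)
        have hX1 : X i1 ω = 0 :=
          (Finset.sum_eq_zero_iff_of_nonneg (fun k _ => hω k)).mp hS0 i1 (Finset.mem_univ _)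
        simp only [hfdef]
        rw [if_neg h]
        simp [hX0, hX1]
    rw [lintegral_congr_ae hpt]
    have hmeas : AEMeasurable (Function.uncurry fun (ω : Ω) (z : ℝ) =>
        ENNReal.ofReal (|X i0 ω - X i1 ω| * Real.exp (-z * S ω)))
        (P.prod (volume.restrict (Ioi 0))) := by
      apply Measurable.aemeasurable
      show Measurable fun p : Ω × ℝ =>
        ENNReal.ofReal (|X i0 p.1 - X i1 p.1| * Real.exp (-p.2 * S p.1))
      exact (((((hX i0).comp measurable_fst).sub ((hX i1).comp measurable_fst)).abs).mul
        (Real.measurable_exp.comp ((measurable_snd.neg).mul (hS.comp measurable_fst)))).ennreal_ofReal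
    rw [lintegral_lintegral_swap hmeas]
    exact lintegral_congr fun z => hfact z
  -- ENNReal core identity
  have key : ∫⁻ ω, ENNReal.ofReal (giniEstimator n X ω) ∂P
      = ENNReal.ofReal ((n : ℝ) / 2) * ∫⁻ z in Ioi (0:ℝ), Am z * (Lm z) ^ (n - 2) := by
    have hpt : ∀ ω, ENNReal.ofReal (giniEstimator n X ω)
        = ENNReal.ofReal ((n : ℝ) / (2 * n.choose 2))
          * ∑ i, ∑ j, if i < j then ENNReal.ofReal (f i j ω) else 0 := by
      intro ω
      rw [hG ω, ENNReal.ofReal_mul (by positivity)]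
      congr 1
      rw [ENNReal.ofReal_sum_of_nonneg (fun i _ => Finset.sum_nonneg fun j _ => by
        split
        · exact hfnn i j ω
        · exact le_refl 0)]
      refine Finset.sum_congr rfl fun i _ => ?_
      rw [ENNReal.ofReal_sum_of_nonneg (fun j _ => by
        split
        · exact hfnn i j ω
        · exact le_refl 0)]
      refine Finset.sum_congr rfl fun j _ => ?_
      split
      · rfl
      · exact ENNReal.ofReal_zero
    simp only [hpt]
    have hmeas1 : ∀ i j : Fin n,
        Measurable fun ω => if i < j then ENNReal.ofReal (f i j ω) else 0 := by
      intro i j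
      by_cases hij : i < j
      · simpa [hij] using (hfmeas i j).ennreal_ofReal
      · simp only [hij, if_false]
        exact measurable_const
    rw [lintegral_const_mul _
      (Finset.measurable_sum _ fun i _ => Finset.measurable_sum _ fun j _ => hmeas1 i j),
      lintegral_finset_sum _ (fun i _ => Finset.measurable_sum _ fun j _ => hmeas1 i j)]
    have hsum2 : ∀ i : Fin n,
        ∫⁻ ω, (∑ j, if i < j then ENNReal.ofReal (f i j ω) else 0) ∂P
        = ∑ j : Fin n, if i < j then (∫⁻ ω, ENNReal.ofReal (f i0 i1 ω) ∂P) else 0 := by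
      intro i
      rw [lintegral_finset_sum _ (fun j _ => hmeas1 i j)]
      refine Finset.sum_congr rfl fun j _ => ?_
      by_cases hij : i < j
      · simp only [if_pos hij]
        exact hexch i j hij
      · simp only [hij, if_false]
        exact lintegral_zero
    rw [Finset.sum_congr rfl (fun i _ => hsum2 i)]
    have hcount : (∑ i : Fin n, ∑ j : Fin n,
          if i < j then (∫⁻ ω, ENNReal.ofReal (f i0 i1 ω) ∂P) else 0)
        = (n.choose 2 : ℝ≥0∞) * ∫⁻ ω, ENNReal.ofReal (f i0 i1 ω) ∂P := by
      have hite : ∀ (i j : Fin n),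
          (if i < j then (∫⁻ ω, ENNReal.ofReal (f i0 i1 ω) ∂P) else 0)
          = (if i < j then (1:ℝ≥0∞) else 0) * ∫⁻ ω, ENNReal.ofReal (f i0 i1 ω) ∂P := by
        intro i j; split <;> simp
      simp_rw [hite, ← Finset.sum_mul]
      congr 1
      rw [← gini_count n]
      push_cast
      rfl
    rw [hcount, hf01, ← mul_assoc]
    congr 1
    rw [show ((n.choose 2 : ℕ) : ℝ≥0∞) = ENNReal.ofReal ((n.choose 2 : ℕ) : ℝ) from
        (ENNReal.ofReal_natCast _).symm,
      ← ENNReal.ofReal_mul (by positivity)]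
    congr 1
    have hC' : (n.choose 2 : ℝ) ≠ 0 := Nat.cast_ne_zero.mpr (by omega)
    field_simp
  -- convert both sides to lintegrals
  have hGnn : ∀ ω, 0 ≤ giniEstimator n X ω := by
    intro ω
    rw [hG ω]
    refine mul_nonneg (by positivity) (Finset.sum_nonneg fun i _ => Finset.sum_nonneg fun j _ => ?_)
    split
    · exact hfnn i j ω
    · exact le_refl 0
  have h1 : ∫ ω, giniEstimator n X ω ∂P
      = (∫⁻ ω, ENNReal.ofReal (giniEstimator n X ω) ∂P).toReal :=
    integral_eq_lintegral_of_nonneg_ae (Filter.Eventually.of_forall hGnn)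
      hGint.aestronglyMeasurable
  have h2 : ∫ z in Ioi (0:ℝ),
        (∫ ω, |X i0 ω - X i1 ω| * Real.exp (-z * (X i0 ω + X i1 ω)) ∂P)
          * (∫ ω, Real.exp (-z * X₀ ω) ∂P) ^ (n - 2)
      = (∫⁻ z in Ioi (0:ℝ), Am z * (Lm z) ^ (n - 2)).toReal := by
    have hAnn : ∀ z : ℝ,
        0 ≤ ∫ ω, |X i0 ω - X i1 ω| * Real.exp (-z * (X i0 ω + X i1 ω)) ∂P :=
      fun z => integral_nonneg fun ω => mul_nonneg (abs_nonneg _) (Real.exp_nonneg _)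
    have hLnn : ∀ z : ℝ, 0 ≤ ∫ ω, Real.exp (-z * X₀ ω) ∂P :=
      fun z => integral_nonneg fun ω => Real.exp_nonneg _
    rw [integral_eq_lintegral_of_nonneg_ae
      (Filter.Eventually.of_forall fun z => mul_nonneg (hAnn z) (pow_nonneg (hLnn z) _))
      hzint.aestronglyMeasurable]
    congr 1
    refine setLIntegral_congr_fun measurableSet_Ioi
      (fun z hz => ?_)
    have hz' : (0:ℝ) < z := hz
    have hLint : Integrable (fun ω => Real.exp (-z * X₀ ω)) P := by
      refine Integrable.mono' (integrable_const 1)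
        (Real.measurable_exp.comp (hX₀.const_mul (-z))).aestronglyMeasurable
        (Filter.Eventually.of_forall fun ω => ?_)
      rw [Real.norm_eq_abs, abs_of_nonneg (Real.exp_nonneg _)]
      exact Real.exp_le_one_iff.mpr (by nlinarith [hpos ω])
    have hAmeas : Measurable fun ω =>
        |X i0 ω - X i1 ω| * Real.exp (-z * (X i0 ω + X i1 ω)) :=
      (((hX i0).sub (hX i1)).abs).mul
        (Real.measurable_exp.comp (((hX i0).add (hX i1)).const_mul (-z)))
    have hAint : Integrable
        (fun ω => |X i0 ω - X i1 ω| * Real.exp (-z * (X i0 ω + X i1 ω))) P := by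
      refine Integrable.mono' (((hXint i0).abs).add ((hXint i1).abs))
        hAmeas.aestronglyMeasurable ?_
      filter_upwards [hae] with ω hω
      rw [Real.norm_eq_abs, abs_of_nonneg (mul_nonneg (abs_nonneg _) (Real.exp_nonneg _))]
      have h1 : Real.exp (-z * (X i0 ω + X i1 ω)) ≤ 1 :=
        Real.exp_le_one_iff.mpr (by nlinarith [hω i0, hω i1])
      calc |X i0 ω - X i1 ω| * Real.exp (-z * (X i0 ω + X i1 ω))
          ≤ |X i0 ω - X i1 ω| * 1 := mul_le_mul_of_nonneg_left h1 (abs_nonneg _)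
        _ = |X i0 ω - X i1 ω| := mul_one _
        _ ≤ |X i0 ω| + |X i1 ω| := abs_sub _ _
    rw [ENNReal.ofReal_mul (hAnn z), ENNReal.ofReal_pow (hLnn z),
      ofReal_integral_eq_lintegral_ofReal hAint
        (Filter.Eventually.of_forall fun ω => mul_nonneg (abs_nonneg _) (Real.exp_nonneg _)),
      ofReal_integral_eq_lintegral_ofReal hLint
        (Filter.Eventually.of_forall fun ω => Real.exp_nonneg _)]
  rw [h1, key, ENNReal.toReal_mul, ENNReal.toReal_ofReal (by positivity), h2]
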